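/- The budget-quota choice function for proportional utilities satisfies substitutability: for X'' ⊆ X' ⊆ X, we have X'' \ Ch(X'') ⊆ X' \ Ch(X'), equivalently Ch(X') ∩ X'' ⊆ Ch(X''). -/

import Mathlib

section Aux
variable {ι : Type*} [LinearOrder ι]

lemma aux_le_getLast {L : List ι} (hL : L.Pairwise (· ≤ ·)) {x : ι}
    (hx : x ∈ L) (h : L ≠ []) : x ≤ L.getLast h := by
  induction L with
  | nil => simp at hx
  | cons a t ih =>
    rcases List.mem_cons.1 hx with rfl | hx'
    · rcases eq_or_ne t [] with rfl | ht
      · simp [List.getLast]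
      · rw [List.getLast_cons ht]
        exact (List.pairwise_cons.1 hL).1 _ (List.getLast_mem ht)
    · have ht : t ≠ [] := List.ne_nil_of_mem hx'
      rw [List.getLast_cons ht]
      exact ih (List.pairwise_cons.1 hL).2 hx' ht

lemma aux_filter_eq_take {x : ι} {L : List ι} (hL : L.Pairwise (· < ·)) :
    L.filter (fun y => y ≤ x) = L.take (L.filter (fun y => y ≤ x)).length := by
  induction L with
  | nil => simp
  | cons a t ih =>
    by_cases hax : a ≤ x
    · have h1 : (a :: t).filter (fun y => y ≤ x) = a :: t.filter (fun y => y ≤ x) := by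
        simp [List.filter_cons, hax]
      rw [h1]
      simp only [List.length_cons, List.take_succ_cons]
      rw [← ih (List.pairwise_cons.1 hL).2]
    · have hxa : x < a := not_le.1 hax
      have h2 : (a :: t).filter (fun y => y ≤ x) = [] := by
        rw [List.filter_eq_nil_iff]
        intro y hy
        rcases List.mem_cons.1 hy with rfl | hy'
        · simp [hax]
        · have : a < y := (List.pairwise_cons.1 hL).1 _ hy'
          simp [not_le.2 (hxa.trans this)]
      simp [h2]

lemma aux_filter_sublist_take {x : ι} {L : List ι} {k : ℕ} (hL : L.Pairwise (· < ·))
    (hx : x ∈ L.take k) : List.Sublist (L.filter (fun y => y ≤ x)) (L.take k) := by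
  induction L generalizing k with
  | nil => simp
  | cons a t ih =>
    cases k with
    | zero => simp at hx
    | succ k =>
      rw [List.take_succ_cons] at hx ⊢
      have hsort := List.pairwise_cons.1 hL
      by_cases hax : a ≤ x
      · have h1 : (a :: t).filter (fun y => y ≤ x) = a :: t.filter (fun y => y ≤ x) := by
          simp [List.filter_cons, hax]
        rw [h1]
        rcases List.mem_cons.1 hx with rfl | hx'
        · have h2 : t.filter (fun y => y ≤ x) = [] := by
            rw [List.filter_eq_nil_iff]
            intro y hy
            simp [not_le.2 (hsort.1 _ hy)]
          rw [h2]
          exact (List.nil_sublist _).cons₂ _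
        · exact (ih hsort.2 hx').cons₂ _
      · exfalso
        rcases List.mem_cons.1 hx with rfl | hx'
        · exact hax le_rfl
        · exact absurd (hsort.1 _ (List.mem_of_mem_take hx')) (not_lt.2 (not_le.1 hax).le)

lemma aux_sort_sublist {s t : Finset ι} (h : s ⊆ t) :
    List.Sublist (s.sort (· ≤ ·)) (t.sort (· ≤ ·)) := by
  apply List.sublist_of_subperm_of_pairwise _ (Finset.pairwise_sort _ _) (Finset.pairwise_sort _ _)
  rw [← Multiset.coe_le, Finset.sort_eq, Finset.sort_eq]
  exact Finset.val_le_iff.2 h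

end Aux


open Finset in
/-- The budget-quota choice function for proportional utilities: sort `A` in
increasing order of wage (the fixed linear order on contracts is consistent with
increasing wage), greedily add each of the first `|A| − 1` contracts while the running
total wage stays strictly below `B` (equivalently, take the longest such prefix), and
finally always add the highest-wage (last) contract. -/
noncomputable def chProp {ι : Type*} [LinearOrder ι] (w : ι → ℝ) (B : ℝ)
    (A : Finset ι) : Finset ι := by
  classical
  exact
    let L := A.sort (· ≤ ·)
    let k := Nat.findGreatest
      (fun k => k ≤ L.length - 1 ∧ ((L.take k).map w).sum < B) (L.length - 1)
    (L.take k).toFinset ∪ L.getLast?.toFinset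

/-- The budget-quota choice function for proportional utilities
satisfies substitutability: for `X'' ⊆ X'`, `X'' \ Ch(X'') ⊆ X' \ Ch(X')`. -/
theorem chProp_substitutable {ι : Type*} [LinearOrder ι]
    (w : ι → ℝ) (B : ℝ) (hB : 0 < B) (hw : ∀ x, 0 < w x)
    (hmono : Monotone w)
    (X'' X' : Finset ι) (hXX : X'' ⊆ X') :
    X'' \ chProp w B X'' ⊆ X' \ chProp w B X' := by
  classical
  intro x hx
  rw [Finset.mem_sdiff] at hx ⊢
  obtain ⟨hx2, hx3⟩ := hx
  refine ⟨hXX hx2, fun hmem => hx3 ?_⟩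
  unfold chProp at hmem ⊢
  simp only [Finset.mem_union, List.mem_toFinset, Option.mem_toFinset, Option.mem_def] at hmem ⊢
  set L'' := X''.sort (· ≤ ·) with hL''def
  set L' := X'.sort (· ≤ ·) with hL'def
  have hxL'' : x ∈ L'' := (Finset.mem_sort _).2 hx2
  have hxL' : x ∈ L' := (Finset.mem_sort _).2 (hXX hx2)
  have hne'' : L'' ≠ [] := List.ne_nil_of_mem hxL''
  have hne' : L' ≠ [] := List.ne_nil_of_mem hxL'
  by_cases hlast : x = L''.getLast hne''
  · right
    rw [List.getLast?_eq_getLast hne'', hlast]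
  · have hxlt : x < L''.getLast hne'' :=
      lt_of_le_of_ne (aux_le_getLast (Finset.pairwise_sort _ _) hxL'' hne'') hlast
    have hglmem : L''.getLast hne'' ∈ L' :=
      (Finset.mem_sort _).2 (hXX ((Finset.mem_sort (α := ι) (· ≤ ·)).1 (List.getLast_mem hne'')))
    rcases hmem with hmem | hmem
    · -- x is in the take-prefix of L'
      left
      set P'' : ℕ → Prop := fun k => k ≤ L''.length - 1 ∧ ((L''.take k).map w).sum < B with hP''
      set k'' := Nat.findGreatest P'' (L''.length - 1) with hk''
      -- sum over the prefix of L' is < B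
      have hP'0 : (0 : ℕ) ≤ L'.length - 1 ∧ (((L'.take 0).map w).sum < B) := by
        simpa using hB
      have hPk' := Nat.findGreatest_spec (P := fun k => k ≤ L'.length - 1 ∧ ((L'.take k).map w).sum < B) (n := L'.length - 1) (Nat.zero_le _) hP'0
      have hsub1 : List.Sublist (L''.filter (fun y => y ≤ x)) (L'.filter (fun y => y ≤ x)) :=
        (aux_sort_sublist hXX).filter _
      have hsub2 := aux_filter_sublist_take (x := x) ((Finset.sortedLT_sort X').pairwise) hmem
      have hsum : ((L''.filter (fun y => y ≤ x)).map w).sum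
          ≤ ((L'.take (Nat.findGreatest (fun k => k ≤ L'.length - 1 ∧ ((L'.take k).map w).sum < B) (L'.length - 1))).map w).sum := by
        refine List.Sublist.sum_le_sum ((hsub1.trans hsub2).map w) ?_
        intro a ha
        obtain ⟨y, _, rfl⟩ := List.mem_map.1 ha
        exact (hw y).le
      set j := (L''.filter (fun y => y ≤ x)).length with hj
      have hfe : L''.filter (fun y => y ≤ x) = L''.take j :=
        aux_filter_eq_take ((Finset.sortedLT_sort X'').pairwise)
      have hxj : x ∈ L''.take j := by
        rw [← hfe]
        exact List.mem_filter.2 ⟨hxL'', by simp⟩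
      have hjlt : j < L''.length := by
        have hsubf : List.Sublist (L''.filter (fun y => y ≤ x)) L'' := List.filter_sublist
        refine lt_of_le_of_ne hsubf.length_le ?_
        intro he
        have heq := hsubf.eq_of_length he
        have : L''.getLast hne'' ∈ L''.filter (fun y => y ≤ x) := by
          rw [heq]; exact List.getLast_mem hne''
        have := (List.mem_filter.1 this).2
        simp only [decide_eq_true_eq] at this
        exact absurd this (not_le.2 hxlt)
      have hPj : P'' j := by
        refine ⟨Nat.le_sub_one_of_lt hjlt, ?_⟩
        rw [← hfe]
        exact lt_of_le_of_lt hsum hPk'.2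
      have hjk : j ≤ k'' := Nat.le_findGreatest hPj.1 hPj
      have htt : L''.take j = (L''.take k'').take j := by
        rw [List.take_take, min_eq_left hjk]
      exact List.mem_of_mem_take (htt ▸ hxj)
    · -- x is the last element of L', contradiction
      exfalso
      have hxeq : x = L'.getLast hne' := by
        rw [List.getLast?_eq_getLast hne'] at hmem
        exact (Option.some_inj.1 hmem).symm
      have : L''.getLast hne'' ≤ x := hxeq ▸ aux_le_getLast (Finset.pairwise_sort _ _) hglmem hne'
      exact absurd this (not_le.2 hxlt)
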